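/- arXiv:1404.2630 — 2 statements merged into one kernel-verified Lean document; each statement's English description precedes it below -/
import Mathlib

section
/- Let h : ℝ² → ℝ be continuous on a neighborhood of the unit circle, let δ > 0, and let p±, q±, r± : ℝ³ → ℝ be polynomials of total degrees at most m, n, p respectively. Then the Malkin bifurcation function M_δ is a polynomial function of z of degree at most s = max{m, n, p}: there exist real numbers I₀(δ), …, I_s(δ) such that M_δ(z) = I_s(δ) z^s + ⋯ + I₁(δ) z + I₀(δ) for all z ∈ ℝ. In particular, if M_δ is not identically zero, it has at most s real zeros. -/
/-- The transition function φ_δ of the regularization process. -/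
noncomputable def phiTrans (δ t : ℝ) : ℝ :=
  if t ≤ -δ then -1 else if t < δ then t / δ else 1

lemma phiTrans_cont {δ : ℝ} (hδ : 0 < δ) : Continuous (phiTrans δ) := by
  have : phiTrans δ = fun t => max (-1) (min 1 (t / δ)) := by
    funext t
    unfold phiTrans
    split_ifs with h1 h2
    · have : t / δ ≤ -1 := by rw [div_le_iff₀ hδ]; linarith
      rw [min_eq_right (this.trans (by norm_num)), max_eq_left this]
    · push_neg at h1
      have hl : -1 < t / δ := by rw [lt_div_iff₀ hδ]; linarith
      have hr : t / δ < 1 := by rw [div_lt_iff₀ hδ]; linarith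
      rw [min_eq_right hr.le, max_eq_right hl.le]
    · push_neg at h1 h2
      have : (1:ℝ) ≤ t / δ := by rw [le_div_iff₀ hδ]; linarith
      rw [min_eq_left this, max_eq_right (by norm_num)]
  rw [this]
  exact continuous_const.max (continuous_const.min (continuous_id.div_const δ))

open Polynomial in
lemma aux_eval_aeval (z : ℝ) (v : Fin 3 → ℝ[X]) (P : MvPolynomial (Fin 3) ℝ) :
    Polynomial.eval z (MvPolynomial.aeval v P)
      = MvPolynomial.eval (fun i => Polynomial.eval z (v i)) P := by
  rw [MvPolynomial.aeval_def]
  calc Polynomial.eval z (MvPolynomial.eval₂ (algebraMap ℝ ℝ[X]) v P)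
      = (Polynomial.evalRingHom z) (MvPolynomial.eval₂ (algebraMap ℝ ℝ[X]) v P) := rfl
    _ = MvPolynomial.eval₂ ((Polynomial.evalRingHom z).comp (algebraMap ℝ ℝ[X]))
          (fun i => Polynomial.eval z (v i)) P :=
        MvPolynomial.eval₂_comp_left _ _ _ _
    _ = MvPolynomial.eval (fun i => Polynomial.eval z (v i)) P := by
        have : (Polynomial.evalRingHom z).comp (algebraMap ℝ ℝ[X]) = RingHom.id ℝ := by
          ext r; simp
        rw [this, MvPolynomial.eval]
        rfl

open Polynomial in
lemma aux_natDegree_aeval_le (v : Fin 3 → ℝ[X]) (hv : ∀ i, (v i).natDegree ≤ 1)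
    (P : MvPolynomial (Fin 3) ℝ) :
    (MvPolynomial.aeval v P).natDegree ≤ P.totalDegree := by
  rw [MvPolynomial.aeval_def, MvPolynomial.eval₂_eq]
  apply Polynomial.natDegree_sum_le_of_forall_le
  intro d hd
  refine (Polynomial.natDegree_mul_le).trans ?_
  have h1 : (algebraMap ℝ ℝ[X] (MvPolynomial.coeff d P)).natDegree = 0 := by
    simp [Polynomial.natDegree_C]
  rw [h1, zero_add]
  refine (Polynomial.natDegree_prod_le _ _).trans ?_
  calc ∑ i ∈ d.support, (v i ^ d i).natDegree
      ≤ ∑ i ∈ d.support, d i := by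
        apply Finset.sum_le_sum
        intro i _
        exact Polynomial.natDegree_pow_le.trans (by
          calc d i * (v i).natDegree ≤ d i * 1 := Nat.mul_le_mul_left _ (hv i)
          _ = d i := Nat.mul_one _)
    _ ≤ P.totalDegree := MvPolynomial.le_totalDegree hd

/-- Substitute `x`, `y`, `z + w` (as a polynomial in `z`) into a trivariate polynomial. -/
noncomputable def auxA (x y w : ℝ) (P : MvPolynomial (Fin 3) ℝ) : Polynomial ℝ :=
  MvPolynomial.aeval ![Polynomial.C x, Polynomial.C y, Polynomial.X + Polynomial.C w] P

lemma auxA_eval (z x y w : ℝ) (P : MvPolynomial (Fin 3) ℝ) :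
    (auxA x y w P).eval z = MvPolynomial.eval ![x, y, z + w] P := by
  rw [auxA, aux_eval_aeval]
  have : (fun i => Polynomial.eval z (![Polynomial.C x, Polynomial.C y,
      Polynomial.X + Polynomial.C w] i)) = ![x, y, z + w] := by
    funext i
    fin_cases i <;> simp
  rw [this]

lemma auxA_deg (x y w : ℝ) (P : MvPolynomial (Fin 3) ℝ) :
    (auxA x y w P).natDegree ≤ P.totalDegree := by
  apply aux_natDegree_aeval_le
  intro i
  fin_cases i <;> simp [Polynomial.natDegree_X_add_C]

/- STATEMENT 8: if p±, q±, r± are polynomials of total degree at most m, n, p, then the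
Malkin bifurcation function M_δ is a polynomial in z of degree at most s = max{m,n,p};
in particular, if it is not identically zero it has at most s real zeros. -/
set_option maxHeartbeats 1000000 in
theorem stmt_8 (h : ℝ × ℝ → ℝ) (U : Set (ℝ × ℝ)) (hUopen : IsOpen U)
    (hUcirc : {w : ℝ × ℝ | w.1 ^ 2 + w.2 ^ 2 = 1} ⊆ U)
    (hh : ContinuousOn h U)
    (δ : ℝ) (hδ : 0 < δ)
    (m n p : ℕ)
    (Pp Qp Rp Pm Qm Rm : MvPolynomial (Fin 3) ℝ)
    (hdPp : Pp.totalDegree ≤ m) (hdPm : Pm.totalDegree ≤ m)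
    (hdQp : Qp.totalDegree ≤ n) (hdQm : Qm.totalDegree ≤ n)
    (hdRp : Rp.totalDegree ≤ p) (hdRm : Rm.totalDegree ≤ p)
    (pp qp rp pm qm rm : ℝ × ℝ × ℝ → ℝ)
    (hpp : ∀ v : ℝ × ℝ × ℝ, pp v = MvPolynomial.eval ![v.1, v.2.1, v.2.2] Pp)
    (hqp : ∀ v : ℝ × ℝ × ℝ, qp v = MvPolynomial.eval ![v.1, v.2.1, v.2.2] Qp)
    (hrp : ∀ v : ℝ × ℝ × ℝ, rp v = MvPolynomial.eval ![v.1, v.2.1, v.2.2] Rp)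
    (hpm : ∀ v : ℝ × ℝ × ℝ, pm v = MvPolynomial.eval ![v.1, v.2.1, v.2.2] Pm)
    (hqm : ∀ v : ℝ × ℝ × ℝ, qm v = MvPolynomial.eval ![v.1, v.2.1, v.2.2] Qm)
    (hrm : ∀ v : ℝ × ℝ × ℝ, rm v = MvPolynomial.eval ![v.1, v.2.1, v.2.2] Rm)
    (Mδ : ℝ → ℝ)
    (hM : ∀ z : ℝ, Mδ z = ∫ s in (0:ℝ)..(2 * Real.pi),
      (let ς : ℝ × ℝ × ℝ :=
        (Real.cos s, Real.sin s, z + ∫ v in (0:ℝ)..s, h (Real.cos v, Real.sin v));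
      -(1 / 2) * (h (Real.cos s, Real.sin s)
            * (-(Real.cos s) * (qp ς + qm ς) + Real.sin s * (pp ς + pm ς))
          + (rp ς + rm ς)
          + (h (Real.cos s, Real.sin s)
              * (Real.cos s * (-(qp ς) + qm ς) + Real.sin s * (pp ς - pm ς))
            + (rp ς - rm ς)) * phiTrans δ (Real.sin s)))) :
    (∃ I : ℕ → ℝ, ∀ z : ℝ,
      Mδ z = ∑ k ∈ Finset.range (max m (max n p) + 1), I k * z ^ k)
    ∧ ((¬ ∀ z : ℝ, Mδ z = 0) →
        {z : ℝ | Mδ z = 0}.Finite ∧ {z : ℝ | Mδ z = 0}.ncard ≤ max m (max n p)) := by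
  set N := max m (max n p) with hN
  set W : ℝ → ℝ := fun s => ∫ v in (0:ℝ)..s, h (Real.cos v, Real.sin v) with hWdef
  set G : ℝ → Polynomial ℝ := fun s =>
    Polynomial.C (-(1/2 : ℝ)) *
      (Polynomial.C (h (Real.cos s, Real.sin s)) *
          (Polynomial.C (-(Real.cos s)) * (auxA (Real.cos s) (Real.sin s) (W s) Qp
              + auxA (Real.cos s) (Real.sin s) (W s) Qm)
            + Polynomial.C (Real.sin s) * (auxA (Real.cos s) (Real.sin s) (W s) Pp
              + auxA (Real.cos s) (Real.sin s) (W s) Pm))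
        + (auxA (Real.cos s) (Real.sin s) (W s) Rp + auxA (Real.cos s) (Real.sin s) (W s) Rm)
        + (Polynomial.C (h (Real.cos s, Real.sin s)) *
            (Polynomial.C (Real.cos s) * (-(auxA (Real.cos s) (Real.sin s) (W s) Qp)
                + auxA (Real.cos s) (Real.sin s) (W s) Qm)
              + Polynomial.C (Real.sin s) * (auxA (Real.cos s) (Real.sin s) (W s) Pp
                - auxA (Real.cos s) (Real.sin s) (W s) Pm))
          + (auxA (Real.cos s) (Real.sin s) (W s) Rp
              - auxA (Real.cos s) (Real.sin s) (W s) Rm))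
          * Polynomial.C (phiTrans δ (Real.sin s))) with hGdef
  -- M is the integral of evaluations of G
  have hMG : ∀ z : ℝ, Mδ z = ∫ s in (0:ℝ)..(2 * Real.pi), (G s).eval z := by
    intro z
    rw [hM z]
    congr 1
    funext s
    simp only [hGdef, hpp, hqp, hrp, hpm, hqm, hrm, Polynomial.eval_mul, Polynomial.eval_add,
      Polynomial.eval_sub, Polynomial.eval_neg, Polynomial.eval_C, auxA_eval]
    rfl
  -- degree bound
  have hdeg : ∀ s, (G s).natDegree ≤ N := by
    intro s
    have hadd : ∀ (a b : Polynomial ℝ), a.natDegree ≤ N → b.natDegree ≤ N →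
        (a + b).natDegree ≤ N := fun a b ha hb =>
      (Polynomial.natDegree_add_le a b).trans (max_le ha hb)
    have hsub : ∀ (a b : Polynomial ℝ), a.natDegree ≤ N → b.natDegree ≤ N →
        (a - b).natDegree ≤ N := fun a b ha hb =>
      (Polynomial.natDegree_sub_le a b).trans (max_le ha hb)
    have hmulC : ∀ (a : Polynomial ℝ) (c : ℝ), a.natDegree ≤ N →
        (a * Polynomial.C c).natDegree ≤ N := fun a c ha =>
      Polynomial.natDegree_mul_le.trans (by simpa using ha)
    have ePp := (auxA_deg (Real.cos s) (Real.sin s) (W s) Pp).trans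
      (hdPp.trans (le_max_left m (max n p)))
    have ePm := (auxA_deg (Real.cos s) (Real.sin s) (W s) Pm).trans
      (hdPm.trans (le_max_left m (max n p)))
    have eQp := (auxA_deg (Real.cos s) (Real.sin s) (W s) Qp).trans
      (hdQp.trans ((le_max_left n p).trans (le_max_right m (max n p))))
    have eQm := (auxA_deg (Real.cos s) (Real.sin s) (W s) Qm).trans
      (hdQm.trans ((le_max_left n p).trans (le_max_right m (max n p))))
    have eRp := (auxA_deg (Real.cos s) (Real.sin s) (W s) Rp).trans
      (hdRp.trans ((le_max_right n p).trans (le_max_right m (max n p))))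
    have eRm := (auxA_deg (Real.cos s) (Real.sin s) (W s) Rm).trans
      (hdRm.trans ((le_max_right n p).trans (le_max_right m (max n p))))
    simp only [hGdef]
    refine (Polynomial.natDegree_C_mul_le _ _).trans ?_
    refine hadd _ _ (hadd _ _ ?_ (hadd _ _ eRp eRm)) (hmulC _ _ ?_)
    · refine (Polynomial.natDegree_C_mul_le _ _).trans ?_
      refine hadd _ _ ?_ ?_
      · exact (Polynomial.natDegree_C_mul_le _ _).trans (hadd _ _ eQp eQm)
      · exact (Polynomial.natDegree_C_mul_le _ _).trans (hadd _ _ ePp ePm)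
    · refine hadd _ _ ?_ (hsub _ _ eRp eRm)
      refine (Polynomial.natDegree_C_mul_le _ _).trans ?_
      refine hadd _ _ ?_ ?_
      · refine (Polynomial.natDegree_C_mul_le _ _).trans (hadd _ _ ?_ eQm)
        exact le_of_eq_of_le (Polynomial.natDegree_neg _) eQp
      · exact (Polynomial.natDegree_C_mul_le _ _).trans (hsub _ _ ePp ePm)
  -- continuity in s for each fixed z
  have hc : Continuous fun s => h (Real.cos s, Real.sin s) := by
    apply hh.comp_continuous (Real.continuous_cos.prodMk Real.continuous_sin)
    intro s
    apply hUcirc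
    simp [Real.cos_sq_add_sin_sq]
  have hWc : Continuous W :=
    intervalIntegral.continuous_primitive (fun a b => hc.intervalIntegrable a b) 0
  have hGevalc : ∀ z : ℝ, Continuous fun s => (G s).eval z := by
    intro z
    have hvec : Continuous fun s => (![Real.cos s, Real.sin s, z + W s] : Fin 3 → ℝ) := by
      apply continuous_pi
      intro i
      fin_cases i
      · simpa using Real.continuous_cos
      · simpa using Real.continuous_sin
      · simpa using (show Continuous fun s => z + W s from continuous_const.add hWc)
    have hevalc : ∀ P : MvPolynomial (Fin 3) ℝ,
        Continuous fun s => MvPolynomial.eval ![Real.cos s, Real.sin s, z + W s] P :=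
      fun P => (MvPolynomial.continuous_eval P).comp hvec
    have hphic : Continuous fun s => phiTrans δ (Real.sin s) :=
      (phiTrans_cont hδ).comp Real.continuous_sin
    simp only [hGdef, Polynomial.eval_mul, Polynomial.eval_add, Polynomial.eval_sub,
      Polynomial.eval_neg, Polynomial.eval_C, auxA_eval]
    exact continuous_const.mul
      (((hc.mul ((Real.continuous_cos.neg.mul ((hevalc Qp).add (hevalc Qm))).add
          (Real.continuous_sin.mul ((hevalc Pp).add (hevalc Pm))))).add
        ((hevalc Rp).add (hevalc Rm))).add
       (((hc.mul ((Real.continuous_cos.mul ((hevalc Qp).neg.add (hevalc Qm))).add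
          (Real.continuous_sin.mul ((hevalc Pp).sub (hevalc Pm))))).add
        ((hevalc Rp).sub (hevalc Rm))).mul hphic))
  have hGint : ∀ z : ℝ, IntervalIntegrable (fun s => (G s).eval z)
      MeasureTheory.volume 0 (2 * Real.pi) :=
    fun z => (hGevalc z).intervalIntegrable _ _
  -- coefficients via Lagrange interpolation
  have hinj : Set.InjOn (fun (i : ℕ) => (i : ℝ)) (Finset.range (N + 1)) :=
    fun a _ b _ hab => Nat.cast_injective hab
  have hinterp : ∀ s, G s = Lagrange.interpolate (Finset.range (N + 1)) (fun i => (i : ℝ))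
      (fun j => (G s).eval (j : ℝ)) := by
    intro s
    apply Lagrange.eq_interpolate hinj
    rw [Finset.card_range]
    exact lt_of_le_of_lt (Polynomial.degree_le_natDegree)
      (by exact_mod_cast Nat.lt_succ_of_le (hdeg s))
  have hcoeff : ∀ s k, (G s).coeff k = ∑ j ∈ Finset.range (N + 1),
      (G s).eval (j : ℝ) *
        (Lagrange.basis (Finset.range (N + 1)) (fun i => (i : ℝ)) j).coeff k := by
    intro s k
    conv_lhs => rw [hinterp s]
    rw [Lagrange.interpolate_apply, Polynomial.finset_sum_coeff]
    exact Finset.sum_congr rfl (fun j _ => by rw [Polynomial.coeff_C_mul])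
  have hcint : ∀ k, IntervalIntegrable (fun s => (G s).coeff k)
      MeasureTheory.volume 0 (2 * Real.pi) := by
    intro k
    have : (fun s => (G s).coeff k) = fun s => ∑ j ∈ Finset.range (N + 1),
        (G s).eval (j : ℝ) *
          (Lagrange.basis (Finset.range (N + 1)) (fun i => (i : ℝ)) j).coeff k :=
      funext fun s => hcoeff s k
    rw [this]
    have hsum := IntervalIntegrable.sum (μ := MeasureTheory.volume) (a := 0) (b := 2 * Real.pi)
      (Finset.range (N + 1))
      (f := fun j t => (G t).eval (j : ℝ) *
        (Lagrange.basis (Finset.range (N + 1)) (fun i => (i : ℝ)) j).coeff k)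
      (fun j _ => (hGint _).mul_const _)
    convert hsum using 1
    · rfl
    funext t
    simp [Finset.sum_apply]
  set I : ℕ → ℝ := fun k => ∫ s in (0:ℝ)..(2 * Real.pi), (G s).coeff k with hIdef
  have hpoly : ∀ z : ℝ, Mδ z = ∑ k ∈ Finset.range (N + 1), I k * z ^ k := by
    intro z
    rw [hMG z]
    calc (∫ s in (0:ℝ)..(2 * Real.pi), (G s).eval z)
        = ∫ s in (0:ℝ)..(2 * Real.pi), ∑ k ∈ Finset.range (N + 1),
            (G s).coeff k * z ^ k := by
          congr 1
          funext s
          exact Polynomial.eval_eq_sum_range' (Nat.lt_succ_of_le (hdeg s)) z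
      _ = ∑ k ∈ Finset.range (N + 1), ∫ s in (0:ℝ)..(2 * Real.pi),
            (G s).coeff k * z ^ k :=
          intervalIntegral.integral_finset_sum (fun k _ => (hcint k).mul_const _)
      _ = ∑ k ∈ Finset.range (N + 1), I k * z ^ k := by
          refine Finset.sum_congr rfl fun k _ => ?_
          rw [hIdef]
          exact intervalIntegral.integral_mul_const _ _
  refine ⟨⟨I, hpoly⟩, ?_⟩
  intro hne
  set Q : Polynomial ℝ := ∑ k ∈ Finset.range (N + 1),
    Polynomial.C (I k) * Polynomial.X ^ k with hQdef
  have hQeval : ∀ z : ℝ, Q.eval z = Mδ z := by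
    intro z
    rw [hpoly z, hQdef, Polynomial.eval_finset_sum]
    simp
  have hQ0 : Q ≠ 0 := by
    intro h0
    apply hne
    intro z
    rw [← hQeval, h0, Polynomial.eval_zero]
  have hset : {z : ℝ | Mδ z = 0} = {z : ℝ | Q.IsRoot z} := by
    ext z
    simp [Polynomial.IsRoot, hQeval]
  constructor
  · rw [hset]
    exact Polynomial.finite_setOf_isRoot hQ0
  · rw [hset]
    have hsub : {z : ℝ | Q.IsRoot z} ⊆ ↑Q.roots.toFinset := by
      intro z hz
      simp only [Finset.coe_sort_coe, Multiset.mem_toFinset, Finset.mem_coe]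
      rw [Polynomial.mem_roots hQ0]
      exact hz
    calc {z : ℝ | Q.IsRoot z}.ncard
        ≤ (↑Q.roots.toFinset : Set ℝ).ncard :=
          Set.ncard_le_ncard hsub (Q.roots.toFinset.finite_toSet)
      _ = Q.roots.toFinset.card := Set.ncard_coe_finset _
      _ ≤ Multiset.card Q.roots := Q.roots.toFinset_card_le
      _ ≤ Q.natDegree := Polynomial.card_roots' _
      _ ≤ N := by
          apply Polynomial.natDegree_sum_le_of_forall_le
          intro k hk
          refine (Polynomial.natDegree_C_mul_le _ _).trans ?_
          rw [Polynomial.natDegree_X_pow]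
          exact Nat.lt_succ_iff.mp (Finset.mem_range.mp hk)
end

section
/- Let a₂₀₀, a₀₂₀, a₀₀₂, a₁₁₀, a₁₀₁, a₀₁₁, b, c ∈ ℝ and define p(x,y,w) = a₂₀₀x² + a₀₂₀y² + a₀₀₂w² + a₁₁₀xy + a₁₀₁xw + a₀₁₁yw. Then the function M̄(z) = ∫₀^{2π} −[ cos s·(−cos s·b + sin s·p(cos s, sin s, z + sin s)) + c ] ds is constant in z: M̄(z) = M̄(0) for all z ∈ ℝ. (This is the smooth Malkin bifurcation function for h(x,y) = x/√(x²+y²), for which h(cos s, sin s) = cos s and ∫₀^s h(cos v, sin v) dv = sin s, with quadratic perturbation p, constant perturbations q = b, r = c, and g⁺ = g⁻.) -/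
/- STATEMENT 11: for the quadratic perturbation p and constant perturbations q = b, r = c,
the smooth Malkin bifurcation function
M̄(z) = ∫₀^{2π} −[cos s·(−cos s·b + sin s·p(cos s, sin s, z + sin s)) + c] ds
is constant in z. -/
theorem stmt_11 (a200 a020 a002 a110 a101 a011 b c : ℝ)
    (p : ℝ → ℝ → ℝ → ℝ)
    (hp : ∀ x y w : ℝ, p x y w =
      a200 * x ^ 2 + a020 * y ^ 2 + a002 * w ^ 2 + a110 * x * y + a101 * x * w + a011 * y * w)
    (M : ℝ → ℝ)
    (hM : ∀ z : ℝ, M z = ∫ s in (0:ℝ)..(2 * Real.pi),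
      -(Real.cos s * (-(Real.cos s) * b
          + Real.sin s * p (Real.cos s) (Real.sin s) (z + Real.sin s)) + c)) :
    ∀ z : ℝ, M z = M 0 := by
  intro z
  rw [hM z, hM 0]
  simp only [hp]
  set F : ℝ → ℝ := fun s => -z * (a002 * z * Real.sin s ^ 2 / 2
      + (2 * a002 + a011) * Real.sin s ^ 3 / 3 - a101 * Real.cos s ^ 3 / 3) with hF
  have hderiv : ∀ s : ℝ, HasDerivAt F
      (-z * (a002 * z * Real.cos s * Real.sin s
        + (2 * a002 + a011) * Real.sin s ^ 2 * Real.cos s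
        + a101 * Real.cos s ^ 2 * Real.sin s)) s := by
    intro s
    have hs := Real.hasDerivAt_sin s
    have hc := Real.hasDerivAt_cos s
    have h := ((((hs.pow 2).const_mul (a002 * z)).div_const 2 |>.add
      (((hs.pow 3).const_mul (2 * a002 + a011)).div_const 3) |>.sub
      (((hc.pow 3).const_mul a101).div_const 3)).const_mul (-z))
    refine h.congr_deriv ?_
    rw [show (2:ℕ) - 1 = 1 from rfl, show (3:ℕ) - 1 = 2 from rfl]
    push_cast
    ring
  have key : ∀ s : ℝ,
      -(Real.cos s * (-(Real.cos s) * b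
          + Real.sin s * (a200 * Real.cos s ^ 2 + a020 * Real.sin s ^ 2
            + a002 * (z + Real.sin s) ^ 2 + a110 * Real.cos s * Real.sin s
            + a101 * Real.cos s * (z + Real.sin s)
            + a011 * Real.sin s * (z + Real.sin s))) + c)
      = -(Real.cos s * (-(Real.cos s) * b
          + Real.sin s * (a200 * Real.cos s ^ 2 + a020 * Real.sin s ^ 2
            + a002 * (0 + Real.sin s) ^ 2 + a110 * Real.cos s * Real.sin s
            + a101 * Real.cos s * (0 + Real.sin s)
            + a011 * Real.sin s * (0 + Real.sin s))) + c)
        + (-z * (a002 * z * Real.cos s * Real.sin s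
          + (2 * a002 + a011) * Real.sin s ^ 2 * Real.cos s
          + a101 * Real.cos s ^ 2 * Real.sin s)) := by
    intro s; ring
  simp only [key]
  have h1 : IntervalIntegrable (fun s : ℝ =>
      -(Real.cos s * (-(Real.cos s) * b
          + Real.sin s * (a200 * Real.cos s ^ 2 + a020 * Real.sin s ^ 2
            + a002 * (0 + Real.sin s) ^ 2 + a110 * Real.cos s * Real.sin s
            + a101 * Real.cos s * (0 + Real.sin s)
            + a011 * Real.sin s * (0 + Real.sin s))) + c))
      MeasureTheory.volume 0 (2 * Real.pi) := by
    apply Continuous.intervalIntegrable; fun_prop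
  have h2 : IntervalIntegrable (fun s : ℝ =>
      -z * (a002 * z * Real.cos s * Real.sin s
        + (2 * a002 + a011) * Real.sin s ^ 2 * Real.cos s
        + a101 * Real.cos s ^ 2 * Real.sin s))
      MeasureTheory.volume 0 (2 * Real.pi) := by
    apply Continuous.intervalIntegrable; fun_prop
  rw [intervalIntegral.integral_add h1 h2]
  have hzero : (∫ s in (0:ℝ)..(2 * Real.pi),
      -z * (a002 * z * Real.cos s * Real.sin s
        + (2 * a002 + a011) * Real.sin s ^ 2 * Real.cos s
        + a101 * Real.cos s ^ 2 * Real.sin s)) = F (2 * Real.pi) - F 0 :=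
    intervalIntegral.integral_eq_sub_of_hasDerivAt (fun s _ => hderiv s) h2
  rw [hzero]
  simp [hF, Real.sin_two_pi, Real.cos_two_pi]
end
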